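/- Suppose $e, f \geq 2$ are integers and there exist sequences of positive integers $(x_n)$ and $(y_n)$ with $y_n \geq n$, and a sublinear error term, such that for every $n$: $e^{y_n}$ divides $f^{x_n}$, and $f^{x_n}$ divides $e^{y_n + z_n}$ where $z_n/n \to 0$, and moreover $x_n = \Theta(y_n)$ (i.e. there are constants $c, C > 0$ with $c\, y_n \leq x_n \leq C\, y_n$). Then: (1) $e$ and $f$ have the same prime divisors; (2) for every prime $p$ dividing $e$ (equivalently $f$), the sequence $x_n/y_n$ converges to $\mathrm{val}_p(e)/\mathrm{val}_p(f)$; (3) consequently there exist an integer $q \geq 2$ and positive integers $r, s$ such that $e = q^r$ and $f = q^s$. -/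

import Mathlib

/-- Arithmetic core of Theorem 8.15: if `e, f ≥ 2` and there are sequences
`(x_n), (y_n)` with `y_n ≥ n`, `x_n = Θ(y_n)` and a sublinear `(z_n)` such that
`e^{y_n} ∣ f^{x_n} ∣ e^{y_n + z_n}`, then `e` and `f` have the same prime
divisors, `x_n / y_n → val_p(e)/val_p(f)` for each prime `p ∣ e`, and `e, f`
are powers of a common integer `q`. -/
theorem lamplighter_arithmetic (e f : ℕ) (he : 2 ≤ e) (hf : 2 ≤ f)
    (x y z : ℕ → ℕ)
    (hx : ∀ n, 0 < x n) (hy0 : ∀ n, 0 < y n) (hy : ∀ n, n ≤ y n)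
    (hz : Filter.Tendsto (fun n => (z n : ℝ) / n) Filter.atTop (nhds 0))
    (hdiv1 : ∀ n, e ^ y n ∣ f ^ x n)
    (hdiv2 : ∀ n, f ^ x n ∣ e ^ (y n + z n))
    (c C : ℝ) (hc : 0 < c) (hC : 0 < C)
    (hΘ : ∀ n, c * y n ≤ (x n : ℝ) ∧ (x n : ℝ) ≤ C * y n) :
    (∀ p : ℕ, p.Prime → (p ∣ e ↔ p ∣ f)) ∧
    (∀ p : ℕ, p.Prime → p ∣ e →
      Filter.Tendsto (fun n => (x n : ℝ) / y n) Filter.atTop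
        (nhds ((padicValNat p e : ℝ) / (padicValNat p f : ℝ)))) ∧
    (∃ q r s : ℕ, 2 ≤ q ∧ 0 < r ∧ 0 < s ∧ e = q ^ r ∧ f = q ^ s) := by
  have he0 : e ≠ 0 := by omega
  have hf0 : f ≠ 0 := by omega
  -- key valuation inequalities
  have key : ∀ p : ℕ, p.Prime → ∀ n,
      y n * padicValNat p e ≤ x n * padicValNat p f ∧
      x n * padicValNat p f ≤ (y n + z n) * padicValNat p e := by
    intro p pp n
    haveI : Fact p.Prime := ⟨pp⟩
    constructor
    · have h1 : p ^ (y n * padicValNat p e) ∣ f ^ x n := by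
        calc p ^ (y n * padicValNat p e) = (p ^ padicValNat p e) ^ y n := by
              rw [← pow_mul, mul_comm]
          _ ∣ e ^ y n := pow_dvd_pow_of_dvd pow_padicValNat_dvd _
          _ ∣ f ^ x n := hdiv1 n
      have h2 := (padicValNat_dvd_iff_le (pow_ne_zero _ hf0)).mp h1
      rwa [padicValNat.pow (a := f)] at h2
    · have h1 : p ^ (x n * padicValNat p f) ∣ e ^ (y n + z n) := by
        calc p ^ (x n * padicValNat p f) = (p ^ padicValNat p f) ^ x n := by
              rw [← pow_mul, mul_comm]
          _ ∣ f ^ x n := pow_dvd_pow_of_dvd pow_padicValNat_dvd _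
          _ ∣ e ^ (y n + z n) := hdiv2 n
      have h2 := (padicValNat_dvd_iff_le (pow_ne_zero _ he0)).mp h1
      rwa [padicValNat.pow (a := e)] at h2
  -- Part 1
  have part1 : ∀ p : ℕ, p.Prime → (p ∣ e ↔ p ∣ f) := by
    intro p pp
    haveI : Fact p.Prime := ⟨pp⟩
    constructor
    · intro hpe
      have ha : 1 ≤ padicValNat p e := one_le_padicValNat_of_dvd (by omega) hpe
      have h := (key p pp 1).1
      have hpos : 0 < x 1 * padicValNat p f :=
        lt_of_lt_of_le (Nat.mul_pos (hy0 1) ha) h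
      apply dvd_of_one_le_padicValNat (n := f)
      by_contra hb
      have hb0 : padicValNat p f = 0 := by omega
      rw [hb0, mul_zero] at hpos
      omega
    · intro hpf
      have hb : 1 ≤ padicValNat p f := one_le_padicValNat_of_dvd (by omega) hpf
      have h := (key p pp 1).2
      have hpos : 0 < (y 1 + z 1) * padicValNat p e :=
        lt_of_lt_of_le (Nat.mul_pos (hx 1) hb) h
      apply dvd_of_one_le_padicValNat (n := e)
      by_contra ha
      have ha0 : padicValNat p e = 0 := by omega
      rw [ha0, mul_zero] at hpos
      omega
  -- Part 2
  have part2 : ∀ p : ℕ, p.Prime → p ∣ e →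
      Filter.Tendsto (fun n => (x n : ℝ) / y n) Filter.atTop
        (nhds ((padicValNat p e : ℝ) / (padicValNat p f : ℝ))) := by
    intro p pp hpe
    haveI : Fact p.Prime := ⟨pp⟩
    set a := padicValNat p e with ha_def
    set b := padicValNat p f with hb_def
    have hA : 0 < a := one_le_padicValNat_of_dvd (by omega) hpe
    have hB : 0 < b := one_le_padicValNat_of_dvd (by omega) ((part1 p pp).mp hpe)
    have hAR : (0:ℝ) < a := by exact_mod_cast hA
    have hBR : (0:ℝ) < b := by exact_mod_cast hB
    have hlow : ∀ n, (a:ℝ)/b ≤ (x n : ℝ) / y n := by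
      intro n
      have h := (key p pp n).1
      have hyn : (0:ℝ) < y n := by exact_mod_cast hy0 n
      rw [div_le_div_iff₀ hBR hyn]
      have h' : ((y n * a : ℕ) : ℝ) ≤ ((x n * b : ℕ) : ℝ) := by exact_mod_cast h
      push_cast at h'
      nlinarith [h']
    have hhigh : ∀ n, 1 ≤ n →
        (x n : ℝ) / y n ≤ (a:ℝ)/b + ((a:ℝ)/b) * ((z n : ℝ) / n) := by
      intro n hn
      have h := (key p pp n).2
      have hyn : (0:ℝ) < y n := by exact_mod_cast hy0 n
      have hnR : (0:ℝ) < n := by exact_mod_cast hn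
      have hyzn : (n:ℝ) ≤ y n := by exact_mod_cast hy n
      have hzn : (0:ℝ) ≤ z n := by positivity
      have h' : ((x n * b : ℕ) : ℝ) ≤ (((y n + z n) * a : ℕ) : ℝ) := by exact_mod_cast h
      push_cast at h'
      have step1 : (x n : ℝ) / y n ≤ (a:ℝ)/b + ((a:ℝ)/b) * ((z n : ℝ) / y n) := by
        have hrw : (a:ℝ)/b + ((a:ℝ)/b) * ((z n : ℝ) / y n)
            = (((y n : ℝ) + z n) * a) / ((y n : ℝ) * b) := by
          field_simp
        rw [hrw, div_le_div_iff₀ hyn (by positivity)]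
        nlinarith [h']
      have step2 : ((z n : ℝ) / y n) ≤ ((z n : ℝ) / n) := by
        gcongr
      calc (x n : ℝ) / y n ≤ (a:ℝ)/b + ((a:ℝ)/b) * ((z n : ℝ) / y n) := step1
        _ ≤ (a:ℝ)/b + ((a:ℝ)/b) * ((z n : ℝ) / n) := by
            have hab : (0:ℝ) ≤ (a:ℝ)/b := by positivity
            nlinarith [step2, hab]
    have hup : Filter.Tendsto (fun n => (a:ℝ)/b + ((a:ℝ)/b) * ((z n : ℝ) / n))
        Filter.atTop (nhds ((a:ℝ)/b)) := by
      have := Filter.Tendsto.add (tendsto_const_nhds (x := (a:ℝ)/b))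
        (hz.const_mul ((a:ℝ)/b))
      simpa using this
    exact tendsto_of_tendsto_of_tendsto_of_le_of_le' tendsto_const_nhds hup
      (Filter.Eventually.of_forall hlow) (Filter.eventually_atTop.mpr ⟨1, hhigh⟩)
  refine ⟨part1, part2, ?_⟩
  -- Part 3
  have pp₀ : (e.minFac).Prime := Nat.minFac_prime (by omega)
  have hp₀e : e.minFac ∣ e := Nat.minFac_dvd e
  haveI : Fact (e.minFac).Prime := ⟨pp₀⟩
  set a₀ := padicValNat e.minFac e with ha₀def
  set b₀ := padicValNat e.minFac f with hb₀def
  have ha₀ : 0 < a₀ := one_le_padicValNat_of_dvd (by omega) hp₀e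
  have hb₀ : 0 < b₀ := one_le_padicValNat_of_dvd (by omega) ((part1 _ pp₀).mp hp₀e)
  have ratio : ∀ p : ℕ, p.Prime → padicValNat p e * b₀ = a₀ * padicValNat p f := by
    intro p pp
    haveI : Fact p.Prime := ⟨pp⟩
    by_cases hpe : p ∣ e
    · have h1 := part2 p pp hpe
      have h2 := part2 e.minFac pp₀ hp₀e
      have heq := tendsto_nhds_unique h1 h2
      have hB : 0 < padicValNat p f :=
        one_le_padicValNat_of_dvd (by omega) ((part1 p pp).mp hpe)
      have hBR : (0:ℝ) < (padicValNat p f : ℝ) := by exact_mod_cast hB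
      have hb₀R : (0:ℝ) < (b₀ : ℝ) := by exact_mod_cast hb₀
      rw [div_eq_div_iff (ne_of_gt hBR) (ne_of_gt hb₀R)] at heq
      exact_mod_cast heq
    · have hpf : ¬ p ∣ f := fun h => hpe ((part1 p pp).mpr h)
      rw [padicValNat.eq_zero_of_not_dvd hpe, padicValNat.eq_zero_of_not_dvd hpf,
        zero_mul, mul_zero]
  set g := Nat.gcd a₀ b₀ with hgdef
  have hg : 0 < g := Nat.gcd_pos_of_pos_left _ ha₀
  set r := a₀ / g with hrdef
  set s := b₀ / g with hsdef
  have hgr : g * r = a₀ := Nat.mul_div_cancel' (Nat.gcd_dvd_left _ _)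
  have hgs : g * s = b₀ := Nat.mul_div_cancel' (Nat.gcd_dvd_right _ _)
  have hr : 0 < r := by
    rcases Nat.eq_zero_or_pos r with h | h
    · rw [h, mul_zero] at hgr; omega
    · exact h
  have hs : 0 < s := by
    rcases Nat.eq_zero_or_pos s with h | h
    · rw [h, mul_zero] at hgs; omega
    · exact h
  have hco : Nat.Coprime r s := Nat.coprime_div_gcd_div_gcd hg
  have hrs : ∀ p : ℕ, p.Prime → s * padicValNat p e = r * padicValNat p f := by
    intro p pp
    have h := ratio p pp
    apply Nat.eq_of_mul_eq_mul_left hg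
    calc g * (s * padicValNat p e) = padicValNat p e * (g * s) := by ring
      _ = padicValNat p e * b₀ := by rw [hgs]
      _ = a₀ * padicValNat p f := h
      _ = (g * r) * padicValNat p f := by rw [hgr]
      _ = g * (r * padicValNat p f) := by ring
  have hdvd : ∀ p : ℕ, p.Prime → r ∣ padicValNat p e := by
    intro p pp
    have : r ∣ s * padicValNat p e := ⟨padicValNat p f, (hrs p pp).symm ▸ rfl⟩
    exact (Nat.Coprime.dvd_of_dvd_mul_left hco (by rw [hrs p pp]; exact Dvd.intro _ rfl))
  set q := e.factorization.prod (fun p k => p ^ (k / r)) with hqdef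
  have hq : q ^ r = e := by
    conv_rhs => rw [← Nat.factorization_prod_pow_eq_self he0]
    rw [hqdef, Finsupp.prod, Finsupp.prod, ← Finset.prod_pow]
    apply Finset.prod_congr rfl
    intro p hp
    have pp : p.Prime := Nat.prime_of_mem_primeFactors (by
      rwa [← Nat.support_factorization])
    rw [← pow_mul, Nat.div_mul_cancel]
    rw [Nat.factorization_def _ pp]
    exact hdvd p pp
  have hq2 : 2 ≤ q := by
    by_contra hq2
    interval_cases q
    · rw [zero_pow (Nat.pos_iff_ne_zero.mp hr)] at hq; omega
    · rw [one_pow] at hq; omega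
  have hq0 : q ≠ 0 := by omega
  refine ⟨q, r, s, hq2, hr, hs, hq.symm, ?_⟩
  rw [Nat.eq_iff_prime_padicValNat_eq f (q ^ s) hf0 (pow_ne_zero _ hq0)]
  intro p pp
  haveI : Fact p.Prime := ⟨pp⟩
  have h1 : padicValNat p e = r * padicValNat p q := by
    rw [← hq, padicValNat.pow (a := q)]
  have h2 := hrs p pp
  rw [padicValNat.pow (a := q)]
  apply Nat.eq_of_mul_eq_mul_left hr
  calc r * padicValNat p f = s * padicValNat p e := h2.symm
    _ = s * (r * padicValNat p q) := by rw [h1]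
    _ = r * (s * padicValNat p q) := by ring
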